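/- arXiv:1902.03521 — 2 statements merged into one kernel-verified Lean document; each statement's English description precedes it below -/
import Mathlib

section
/- Let G be a countable discrete group acting by nonsingular transformations on a σ-finite measure space (X, μ), let H ≤ G be a subgroup of finite index, and suppose μ̃ is a measure on G/H × X such that the diagonal G-action g·(kH, x) = (gkH, gx) on (G/H × X, μ̃) is nonsingular and ergodic, and the restriction of μ̃ to {H} × X equals μ. Then the action of H on (X, μ) is ergodic. -/
open MeasureTheory

/-- Quotients of groups by subgroups, regarded as countable discrete measurable spaces. -/
instance quotientGroupMeasurableSpace {G : Type*} [Group G] (H : Subgroup G) :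
    MeasurableSpace (G ⧸ H) := ⊤

/-- Let `G` be a countable discrete group acting by nonsingular transformations on a σ-finite
measure space `(X, μ)`, let `H ≤ G` have finite index, and suppose `μ̃` is a measure on
`G/H × X` such that the diagonal `G`-action `g·(kH, x) = (gkH, gx)` is nonsingular and ergodic
and the restriction of `μ̃` to `{H} × X` equals `μ`.  Then the `H`-action on `(X, μ)` is
ergodic. -/
theorem stmt13 {G X : Type*} [Group G] [Countable G] [MulAction G X]
    [MeasurableSpace X] (μ : Measure X) [SigmaFinite μ]
    (hmeas : ∀ g : G, Measurable fun x : X => g • x)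
    (hns : ∀ (g : G) (s : Set X), MeasurableSet s → (μ s = 0 ↔ μ ((fun x => g • x) ⁻¹' s) = 0))
    (H : Subgroup G) [H.FiniteIndex]
    (μt : Measure ((G ⧸ H) × X))
    (hrestrict : ∀ s : Set X, MeasurableSet s → μt ({((1 : G) : G ⧸ H)} ×ˢ s) = μ s)
    (hnst : ∀ (g : G) (s : Set ((G ⧸ H) × X)), MeasurableSet s →
      (μt s = 0 ↔ μt ((fun z : (G ⧸ H) × X => (g • z.1, g • z.2)) ⁻¹' s) = 0))
    (herg : ∀ s : Set ((G ⧸ H) × X), MeasurableSet s →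
      (∀ g : G, (fun z : (G ⧸ H) × X => (g • z.1, g • z.2)) ⁻¹' s = s) →
      μt s = 0 ∨ μt sᶜ = 0) :
    ∀ s : Set X, MeasurableSet s → (∀ h : H, (fun x : X => (h : G) • x) ⁻¹' s = s) →
      μ s = 0 ∨ μ sᶜ = 0 := by
  intro s hs hinv
  classical
  set S : Set ((G ⧸ H) × X) :=
    ⋃ g : G, {((g : G ⧸ H))} ×ˢ ((fun x => g⁻¹ • x) ⁻¹' s) with hSdef
  have hSmem : ∀ z : (G ⧸ H) × X,
      z ∈ S ↔ ∃ g : G, (g : G ⧸ H) = z.1 ∧ g⁻¹ • z.2 ∈ s := by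
    intro z
    simp only [hSdef, Set.mem_iUnion, Set.mem_prod, Set.mem_singleton_iff, Set.mem_preimage]
    constructor
    · rintro ⟨g, h1, h2⟩; exact ⟨g, h1.symm, h2⟩
    · rintro ⟨g, h1, h2⟩; exact ⟨g, h1.symm, h2⟩
  have hSmeas : MeasurableSet S :=
    MeasurableSet.iUnion fun g =>
      (MeasurableSet.singleton _).prod ((hmeas g⁻¹) hs)
  have hSinv : ∀ g : G, (fun z : (G ⧸ H) × X => (g • z.1, g • z.2)) ⁻¹' S = S := by
    intro g
    ext z
    simp only [Set.mem_preimage, hSmem]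
    constructor
    · rintro ⟨k, hk1, hk2⟩
      refine ⟨g⁻¹ * k, ?_, ?_⟩
      · have := congrArg (fun q => g⁻¹ • q) hk1
        simpa [MulAction.Quotient.smul_coe, inv_smul_smul] using this
      · simpa [mul_inv_rev, mul_smul] using hk2
    · rintro ⟨k, hk1, hk2⟩
      refine ⟨g * k, ?_, ?_⟩
      · rw [← hk1]; exact (MulAction.Quotient.smul_coe H g k).symm
      · simpa [mul_inv_rev, mul_smul] using hk2
  rcases herg S hSmeas hSinv with h0 | h1
  · left
    have hsub : ({((1 : G) : G ⧸ H)} ×ˢ s) ⊆ S := by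
      rintro ⟨q, x⟩ ⟨hq, hx⟩
      exact (hSmem _).2 ⟨1, by simpa using hq.symm, by simpa using hx⟩
    rw [← hrestrict s hs]
    exact measure_mono_null hsub h0
  · right
    have hsub : ({((1 : G) : G ⧸ H)} ×ˢ sᶜ) ⊆ Sᶜ := by
      rintro ⟨q, x⟩ ⟨hq, hx⟩ hmem
      rcases (hSmem _).1 hmem with ⟨k, hk1, hk2⟩
      have hkH : k ∈ H := by
        have heq : ((1 : G) : G ⧸ H) = (k : G ⧸ H) := by rw [hk1]; simpa using hq.symm
        simpa using QuotientGroup.eq.mp heq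
      have : x ∈ s := by
        have := hinv ⟨k⁻¹, H.inv_mem hkH⟩
        rw [← this]; exact hk2
      exact hx this
    rw [← hrestrict sᶜ hs.compl]
    exact measure_mono_null hsub h1
end

section
/- Let K = ℚ, m ≥ 1, and let m be the modulus consisting of the real place together with mℤ. Let I_m be the group of fractional ideals of ℚ coprime to m and K_{m,1} = {x ∈ ℚ_{>0} : v_p(x) = 0 for all p | m and x ≡ 1 (mod m)} (as an element of (ℤ/mℤ)^* via numerator and denominator). Then the map (ℤ/mℤ)^* → I_m/i(K_{m,1}) sending the class of a (with gcd(a,m)=1, a > 0) to the class of the ideal aℤ is a well-defined group isomorphism. -/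
open scoped nonZeroDivisors

lemma principal_inj_pos {x y : ℚ} (hx : 0 < x) (hy : 0 < y) (hx0 : x ≠ 0) (hy0 : y ≠ 0)
    (h : toPrincipalIdeal ℤ ℚ (Units.mk0 x hx0) = toPrincipalIdeal ℤ ℚ (Units.mk0 y hy0)) :
    x = y := by
  have h2 : FractionalIdeal.spanSingleton ℤ⁰ x = FractionalIdeal.spanSingleton ℤ⁰ y := by
    have := congrArg Units.val h
    rwa [coe_toPrincipalIdeal, coe_toPrincipalIdeal] at this
  obtain ⟨z, hz⟩ := FractionalIdeal.spanSingleton_eq_spanSingleton.mp h2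
  rcases Int.units_eq_one_or z with rfl | rfl
  · simpa using hz
  · exfalso
    simp only [Units.smul_def, Units.val_neg, Units.val_one, neg_smul, one_smul] at hz
    nlinarith

lemma cross_nat {a b c d : ℕ} (hb : 0 < b) (hd : 0 < d)
    (h : (a : ℚ) / b = (c : ℚ) / d) : a * d = c * b := by
  have hb' : (b:ℚ) ≠ 0 := by positivity
  have hd' : (d:ℚ) ≠ 0 := by positivity
  field_simp at h
  exact_mod_cast h.trans (mul_comm _ _)

lemma unit_frac_eq {m : ℕ} {a b c d : ℕ} (hca : a.Coprime m) (hcb : b.Coprime m)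
    (hcc : c.Coprime m) (hcd : d.Coprime m) (h : a * d = c * b) :
    ZMod.unitOfCoprime a hca * (ZMod.unitOfCoprime b hcb)⁻¹ =
      ZMod.unitOfCoprime c hcc * (ZMod.unitOfCoprime d hcd)⁻¹ := by
  rw [← div_eq_mul_inv, ← div_eq_mul_inv, div_eq_div_iff_mul_eq_mul]
  rw [Units.ext_iff]
  simp only [Units.val_mul, ZMod.coe_unitOfCoprime]
  exact_mod_cast congrArg (Nat.cast : ℕ → ZMod m) h

lemma unitOfCoprime_mul {m a c : ℕ} (hca : a.Coprime m) (hcc : c.Coprime m) :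
    ZMod.unitOfCoprime (a*c) (Nat.Coprime.mul hca hcc) =
      ZMod.unitOfCoprime a hca * ZMod.unitOfCoprime c hcc := by
  rw [Units.ext_iff]; simp [ZMod.coe_unitOfCoprime]


/-- Let `K = ℚ` with modulus `m = ∞ · mℤ`.  Let `Im` be the group of fractional ideals of `ℚ`
coprime to `m` (every such ideal is `(a/b)ℤ` with `a, b` positive integers coprime to `m`),
and `P₁ = i(K_{m,1})` the subgroup of principal fractional ideals generated by positive
rationals `a/b` with `a ≡ b (mod m)`.  Then the map `(ℤ/mℤ)^* → Im/P₁` sending the class of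
`a` (with `gcd(a,m) = 1`, `a > 0`) to the class of the ideal `aℤ` is a well-defined group
isomorphism. -/
theorem stmt16 (m : ℕ) (hm : 1 ≤ m)
    (Im : Subgroup (FractionalIdeal ℤ⁰ ℚ)ˣ)
    (hIm : ∀ I : (FractionalIdeal ℤ⁰ ℚ)ˣ, I ∈ Im ↔
      ∃ a b : ℕ, 0 < a ∧ 0 < b ∧ a.Coprime m ∧ b.Coprime m ∧
        ∃ h : ((a : ℚ) / (b : ℚ)) ≠ 0,
          I = toPrincipalIdeal ℤ ℚ (Units.mk0 ((a : ℚ) / (b : ℚ)) h))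
    (P₁ : Subgroup Im)
    (hP₁ : ∀ J : Im, J ∈ P₁ ↔
      ∃ a b : ℕ, 0 < a ∧ 0 < b ∧ a.Coprime m ∧ b.Coprime m ∧ a ≡ b [MOD m] ∧
        ∃ h : ((a : ℚ) / (b : ℚ)) ≠ 0,
          (J : (FractionalIdeal ℤ⁰ ℚ)ˣ) = toPrincipalIdeal ℤ ℚ (Units.mk0 ((a : ℚ) / (b : ℚ)) h)) :
    ∃ φ : (ZMod m)ˣ ≃* (Im ⧸ P₁),
      ∀ (a : ℕ) (ha : 0 < a) (hcop : a.Coprime m)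
        (h0 : ((a : ℚ)) ≠ 0) (hmem : toPrincipalIdeal ℤ ℚ (Units.mk0 (a : ℚ) h0) ∈ Im),
        φ (ZMod.unitOfCoprime a hcop) =
          QuotientGroup.mk (⟨toPrincipalIdeal ℤ ℚ (Units.mk0 (a : ℚ) h0), hmem⟩ : Im) := by
  haveI : NeZero m := ⟨by omega⟩
  have hsel : ∀ I : Im, ∃ u : (ZMod m)ˣ, ∀ (a b : ℕ), 0 < a → 0 < b →
      ∀ (hca : a.Coprime m) (hcb : b.Coprime m) (h : ((a:ℚ)/(b:ℚ)) ≠ 0),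
      (I : (FractionalIdeal ℤ⁰ ℚ)ˣ) = toPrincipalIdeal ℤ ℚ (Units.mk0 ((a:ℚ)/(b:ℚ)) h) →
      u = ZMod.unitOfCoprime a hca * (ZMod.unitOfCoprime b hcb)⁻¹ := by
    intro I
    obtain ⟨a, b, ha, hb, hca, hcb, h, hI⟩ := (hIm I.1).mp I.2
    refine ⟨ZMod.unitOfCoprime a hca * (ZMod.unitOfCoprime b hcb)⁻¹, ?_⟩
    intro c d hc hd hcc hcd h' hI'
    have hq : (a:ℚ)/b = (c:ℚ)/d := by
      refine principal_inj_pos ?_ ?_ h h' (hI.symm.trans hI')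
      · exact div_pos (by exact_mod_cast ha) (by exact_mod_cast hb)
      · exact div_pos (by exact_mod_cast hc) (by exact_mod_cast hd)
    exact unit_frac_eq hca hcb hcc hcd (cross_nat hb hd hq)
  let F0 : Im → (ZMod m)ˣ := fun I => (hsel I).choose
  have hF0 : ∀ (I : Im) (a b : ℕ), 0 < a → 0 < b →
      ∀ (hca : a.Coprime m) (hcb : b.Coprime m) (h : ((a:ℚ)/(b:ℚ)) ≠ 0),
      (I : (FractionalIdeal ℤ⁰ ℚ)ˣ) = toPrincipalIdeal ℤ ℚ (Units.mk0 ((a:ℚ)/(b:ℚ)) h) →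
      F0 I = ZMod.unitOfCoprime a hca * (ZMod.unitOfCoprime b hcb)⁻¹ :=
    fun I => (hsel I).choose_spec
  have hmul : ∀ I J : Im, F0 (I*J) = F0 I * F0 J := by
    intro I J
    obtain ⟨a, b, ha, hb, hca, hcb, h, hI⟩ := (hIm I.1).mp I.2
    obtain ⟨c, d, hc, hd, hcc, hcd, h', hJ⟩ := (hIm J.1).mp J.2
    have hne : ((↑(a*c):ℚ)/(↑(b*d):ℚ)) ≠ 0 := by
      have : (0:ℚ) < (↑(a*c):ℚ)/(↑(b*d):ℚ) :=
        div_pos (by exact_mod_cast Nat.mul_pos ha hc) (by exact_mod_cast Nat.mul_pos hb hd)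
      exact ne_of_gt this
    have hprod : ((I*J : Im) : (FractionalIdeal ℤ⁰ ℚ)ˣ) =
        toPrincipalIdeal ℤ ℚ (Units.mk0 ((↑(a*c):ℚ)/(↑(b*d):ℚ)) hne) := by
      have hmk : Units.mk0 ((↑(a*c):ℚ)/(↑(b*d):ℚ)) hne =
          Units.mk0 _ h * Units.mk0 _ h' := by
        rw [Units.ext_iff]
        simp only [Units.val_mul, Units.val_mk0]
        push_cast
        rw [div_mul_div_comm]
      rw [Subgroup.coe_mul, hI, hJ, hmk, map_mul]
    rw [hF0 (I*J) (a*c) (b*d) (Nat.mul_pos ha hc) (Nat.mul_pos hb hd)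
        (Nat.Coprime.mul hca hcc) (Nat.Coprime.mul hcb hcd) hne hprod,
      hF0 I a b ha hb hca hcb h hI, hF0 J c d hc hd hcc hcd h' hJ,
      unitOfCoprime_mul, unitOfCoprime_mul, mul_inv]
    exact mul_mul_mul_comm _ _ _ _
  let F : Im →* (ZMod m)ˣ := MonoidHom.mk' F0 hmul
  have hone : ZMod.unitOfCoprime 1 (Nat.coprime_one_left m) = 1 := by
    rw [Units.ext_iff]; simp
  have hsurj : Function.Surjective F := by
    intro u
    set a := (u : ZMod m).val + m with ha_def
    have hcop : a.Coprime m := Nat.coprime_add_self_left.mpr (ZMod.val_coe_unit_coprime u)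
    have hapos : 0 < a := by omega
    have h0 : ((a:ℚ)/((1:ℕ):ℚ)) ≠ 0 := by
      have : (0:ℚ) < (a:ℚ)/((1:ℕ):ℚ) := div_pos (by exact_mod_cast hapos) (by norm_num)
      exact ne_of_gt this
    have hmem : toPrincipalIdeal ℤ ℚ (Units.mk0 _ h0) ∈ Im :=
      (hIm _).mpr ⟨a, 1, hapos, one_pos, hcop, Nat.coprime_one_left m, h0, rfl⟩
    refine ⟨⟨_, hmem⟩, ?_⟩
    have hFI : F0 ⟨_, hmem⟩ = ZMod.unitOfCoprime a hcop * (ZMod.unitOfCoprime 1 (Nat.coprime_one_left m))⁻¹ :=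
      hF0 ⟨_, hmem⟩ a 1 hapos one_pos hcop (Nat.coprime_one_left m) h0 rfl
    show F0 ⟨_, hmem⟩ = u
    rw [hFI, hone, inv_one, mul_one, Units.ext_iff, ZMod.coe_unitOfCoprime, ha_def]
    push_cast
    simp [ZMod.natCast_self, ZMod.natCast_val, ZMod.cast_id]
  have hker : F.ker = P₁ := by
    ext I
    rw [MonoidHom.mem_ker, hP₁]
    constructor
    · intro hFI
      obtain ⟨a, b, ha, hb, hca, hcb, h, hI⟩ := (hIm I.1).mp I.2
      refine ⟨a, b, ha, hb, hca, hcb, ?_, h, hI⟩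
      have hFI' : F0 I = 1 := hFI
      rw [hF0 I a b ha hb hca hcb h hI] at hFI'
      have h2 : ZMod.unitOfCoprime a hca = ZMod.unitOfCoprime b hcb := mul_inv_eq_one.mp hFI'
      have h3 := congrArg Units.val h2
      simp only [ZMod.coe_unitOfCoprime] at h3
      exact (ZMod.natCast_eq_natCast_iff a b m).mp h3
    · rintro ⟨a, b, ha, hb, hca, hcb, hab, h, hI⟩
      show F0 I = 1
      rw [hF0 I a b ha hb hca hcb h hI, mul_inv_eq_one, Units.ext_iff]
      simp only [ZMod.coe_unitOfCoprime]
      exact (ZMod.natCast_eq_natCast_iff a b m).mpr hab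
  let e : (Im ⧸ P₁) ≃* (ZMod m)ˣ :=
    (QuotientGroup.quotientMulEquivOfEq hker.symm).trans
      (QuotientGroup.quotientKerEquivOfSurjective F hsurj)
  refine ⟨e.symm, ?_⟩
  intro a ha hcop h0 hmem
  have h1 : ((a:ℚ)/((1:ℕ):ℚ)) ≠ 0 := by simpa using h0
  have hmk : Units.mk0 ((a:ℚ)) h0 = Units.mk0 ((a:ℚ)/((1:ℕ):ℚ)) h1 := by
    rw [Units.ext_iff]; simp
  have hx : ((⟨toPrincipalIdeal ℤ ℚ (Units.mk0 (a:ℚ) h0), hmem⟩ : Im) : (FractionalIdeal ℤ⁰ ℚ)ˣ)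
      = toPrincipalIdeal ℤ ℚ (Units.mk0 ((a:ℚ)/((1:ℕ):ℚ)) h1) := by rw [← hmk]
  have hF : F (⟨toPrincipalIdeal ℤ ℚ (Units.mk0 (a:ℚ) h0), hmem⟩ : Im) = ZMod.unitOfCoprime a hcop := by
    show F0 _ = _
    rw [hF0 _ a 1 ha one_pos hcop (Nat.coprime_one_left m) h1 hx, hone, inv_one, mul_one]
  have he : e (QuotientGroup.mk (⟨toPrincipalIdeal ℤ ℚ (Units.mk0 (a:ℚ) h0), hmem⟩ : Im))
      = ZMod.unitOfCoprime a hcop := by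
    show (QuotientGroup.quotientKerEquivOfSurjective F hsurj)
      ((QuotientGroup.quotientMulEquivOfEq hker.symm) (QuotientGroup.mk _)) = _
    rw [QuotientGroup.quotientMulEquivOfEq_mk]
    exact (QuotientGroup.kerLift_mk F _).trans hF
  rw [← he, MulEquiv.symm_apply_apply]
end
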